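/- Let a_i, b_i, c_i, d_i, r_i, s_i ∈ ℝ for i = 1, 2, 3, define M_i, S_v, H, B₁, …, B₅ as follows: M_i = [[a_i, b_i, c_i], [b_i, d_i, r_i], [c_i, r_i, s_i]], S_v = Σ_{i=1}^{3} v_i M_i for v ∈ ℝ³, H = ((a_i + d_i + s_i)/3)_{i}, B₁ = ((−a_i − d_i + 2s_i)/12)_{i}, B₂ = ((a_i − d_i)/2)_{i}, B₃ = (b_i)_{i}, B₄ = (c_i)_{i}, B₅ = (r_i)_{i}. Suppose the linear span W of {B₁, …, B₅} in ℝ³ has dimension 2, and let v₀ be a unit vector orthogonal to W with ⟨H, v₀⟩ ≠ 0. Then the set {ν ∈ ℝ³ : S_ν = I₃} consists of exactly one element, namely ν = (1/⟨H, v₀⟩)·v₀. -/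

import Mathlib

open scoped RealInnerProductSpace
set_option maxHeartbeats 2000000 in
theorem stmt16 (a b c d r s : Fin 3 → ℝ)
    (B₁ B₂ B₃ B₄ B₅ H v₀ : EuclideanSpace ℝ (Fin 3))
    (hB₁ : ∀ i, B₁ i = (-a i - d i + 2 * s i) / 12)
    (hB₂ : ∀ i, B₂ i = (a i - d i) / 2)
    (hB₃ : ∀ i, B₃ i = b i)
    (hB₄ : ∀ i, B₄ i = c i)
    (hB₅ : ∀ i, B₅ i = r i)
    (hH : ∀ i, H i = (a i + d i + s i) / 3)
    (hW : Module.finrank ℝ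
      (Submodule.span ℝ ({B₁, B₂, B₃, B₄, B₅} : Set (EuclideanSpace ℝ (Fin 3)))) = 2)
    (hv₀ : ‖v₀‖ = 1)
    (hv₀W : ∀ w ∈ Submodule.span ℝ ({B₁, B₂, B₃, B₄, B₅} : Set (EuclideanSpace ℝ (Fin 3))),
      ⟪v₀, w⟫ = 0)
    (hHv₀ : ⟪H, v₀⟫ ≠ 0) :
    {ν : EuclideanSpace ℝ (Fin 3) |
        (∑ i : Fin 3, ν i • !![a i, b i, c i; b i, d i, r i; c i, r i, s i])
          = (1 : Matrix (Fin 3) (Fin 3) ℝ)}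
      = {(1 / ⟪H, v₀⟫) • v₀} := by
  set W := Submodule.span ℝ ({B₁, B₂, B₃, B₄, B₅} : Set (EuclideanSpace ℝ (Fin 3))) with hWdef
  have hv₀mem : v₀ ∈ Wᗮ := by
    rw [Submodule.mem_orthogonal]
    intro u hu
    rw [real_inner_comm]
    exact hv₀W u hu
  have hv₀ne : v₀ ≠ 0 := fun h => by simp [h] at hv₀
  have hfin : Module.finrank ℝ Wᗮ = 1 := by
    have h1 := Submodule.finrank_add_finrank_orthogonal (K := W)
    have h3 : Module.finrank ℝ (EuclideanSpace ℝ (Fin 3)) = 3 := by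
      simp [finrank_euclideanSpace]
    omega
  have hspan : Submodule.span ℝ ({v₀} : Set (EuclideanSpace ℝ (Fin 3))) = Wᗮ := by
    apply Submodule.eq_of_le_of_finrank_le
    · rw [Submodule.span_singleton_le_iff_mem]; exact hv₀mem
    · rw [hfin, finrank_span_singleton hv₀ne]
  -- inner products with generators
  have hmemB : ∀ X ∈ ({B₁, B₂, B₃, B₄, B₅} : Set (EuclideanSpace ℝ (Fin 3))), ⟪v₀, X⟫ = 0 :=
    fun X hX => hv₀W X (Submodule.subset_span hX)
  have iB1 := hmemB B₁ (by simp)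
  have iB2 := hmemB B₂ (by simp)
  have iB3 := hmemB B₃ (by simp)
  have iB4 := hmemB B₄ (by simp)
  have iB5 := hmemB B₅ (by simp)
  have inner_expand : ∀ x y : EuclideanSpace ℝ (Fin 3),
      ⟪x, y⟫ = x 0 * y 0 + x 1 * y 1 + x 2 * y 2 := fun x y => by
    simp [PiLp.inner_apply, Fin.sum_univ_three, RCLike.inner_apply]; ring
  rw [inner_expand] at iB1 iB2 iB3 iB4 iB5
  simp only [hB₁, hB₂, hB₃, hB₄, hB₅] at iB1 iB2 iB3 iB4 iB5
  have hκ : ⟪H, v₀⟫ = H 0 * v₀ 0 + H 1 * v₀ 1 + H 2 * v₀ 2 := inner_expand H v₀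
  ext ν
  simp only [Set.mem_setOf_eq, Set.mem_singleton_iff]
  constructor
  · intro hm
    have e00 := congrFun (congrFun hm 0) 0
    have e01 := congrFun (congrFun hm 0) 1
    have e02 := congrFun (congrFun hm 0) 2
    have e11 := congrFun (congrFun hm 1) 1
    have e12 := congrFun (congrFun hm 1) 2
    have e22 := congrFun (congrFun hm 2) 2
    simp [Fin.sum_univ_three, Matrix.one_apply] at e00 e01 e02 e11 e12 e22
    -- ν orthogonal to all generators
    have hνmem : ν ∈ Wᗮ := by
      rw [Submodule.mem_orthogonal]
      intro u hu
      induction hu using Submodule.span_induction with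
      | mem x hx =>
        rw [real_inner_comm, inner_expand]
        rcases hx with h | h | h | h | h <;> subst h <;>
          simp only [hB₁, hB₂, hB₃, hB₄, hB₅] <;> linarith
      | zero => simp
      | add x y _ _ hx hy => rw [inner_add_left, hx, hy]; ring
      | smul t x _ hx => rw [inner_smul_left, hx]; ring
    rw [← hspan, Submodule.mem_span_singleton] at hνmem
    obtain ⟨t, rfl⟩ := hνmem
    simp only [PiLp.smul_apply, smul_eq_mul] at e00 e11 e22
    have hinner : t * ⟪H, v₀⟫ = 1 := by
      rw [hκ]; simp only [hH]; nlinarith [e00, e11, e22]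
    have ht : t = 1 / ⟪H, v₀⟫ := (eq_div_iff hHv₀).mpr hinner
    rw [ht]
  · rintro rfl
    have hv : ∀ i, ((1 / ⟪H, v₀⟫) • v₀ : EuclideanSpace ℝ (Fin 3)) i = (1 / ⟪H, v₀⟫) * v₀ i :=
      fun i => by simp [PiLp.smul_apply]
    ext j k
    have hne : H 0 * v₀ 0 + H 1 * v₀ 1 + H 2 * v₀ 2 ≠ 0 := by rw [← hκ]; exact hHv₀
    have key0 : v₀ 0 * a 0 + v₀ 1 * a 1 + v₀ 2 * a 2 = H 0 * v₀ 0 + H 1 * v₀ 1 + H 2 * v₀ 2 := by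
      simp only [hH]; linarith
    have key1 : v₀ 0 * d 0 + v₀ 1 * d 1 + v₀ 2 * d 2 = H 0 * v₀ 0 + H 1 * v₀ 1 + H 2 * v₀ 2 := by
      simp only [hH]; linarith
    have key2 : v₀ 0 * s 0 + v₀ 1 * s 1 + v₀ 2 * s 2 = H 0 * v₀ 0 + H 1 * v₀ 1 + H 2 * v₀ 2 := by
      simp only [hH]; linarith
    fin_cases j <;> fin_cases k <;>
      simp [Fin.sum_univ_three, Matrix.one_apply, hv] <;> field_simp <;> linarith
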